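/- Define a coproduct on the free algebra on generators e, f, k, k^{-1} by Δ(e) = e⊗k + k^{-1}⊗e, Δ(f) = f⊗k + k^{-1}⊗f, Δ(k^{±1}) = k^{±1}⊗k^{±1}, extended as an algebra morphism. Then Δ descends to the quotient H' by the ideal generated by the relations kk^{-1}-1, k^{-1}k-1, ek+q^{-1}ke, fk+qkf, ef-fe-(q-q^{-1})(k²-k^{-2}); i.e., Δ maps each relation into the ideal of H'⊗H' generated by the relations. -/

import Mathlib

noncomputable section

open TensorProduct

/-- Generators of H'. -/
inductive HGen | e | f | k | kinv

open HGen

/-- Defining relations of H'. -/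
inductive HRel {F : Type} [Field F] (q : F) : FreeAlgebra F HGen → FreeAlgebra F HGen → Prop
  | kk : HRel q (FreeAlgebra.ι F k * FreeAlgebra.ι F kinv) 1
  | kk' : HRel q (FreeAlgebra.ι F kinv * FreeAlgebra.ι F k) 1
  | ek : HRel q (FreeAlgebra.ι F e * FreeAlgebra.ι F k)
      (-q⁻¹ • (FreeAlgebra.ι F k * FreeAlgebra.ι F e))
  | fk : HRel q (FreeAlgebra.ι F f * FreeAlgebra.ι F k)
      (-q • (FreeAlgebra.ι F k * FreeAlgebra.ι F f))
  | ef : HRel q (FreeAlgebra.ι F e * FreeAlgebra.ι F f - FreeAlgebra.ι F f * FreeAlgebra.ι F e)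
      ((q - q⁻¹) • ((FreeAlgebra.ι F k) ^ 2 - (FreeAlgebra.ι F kinv) ^ 2))

/-- H' as a quotient of the free algebra. -/
abbrev Hq {F : Type} [Field F] (q : F) := RingQuot (HRel q)

/-- The images of the generators in H'. -/
def HMk {F : Type} [Field F] (q : F) (g : HGen) : Hq q :=
  RingQuot.mkAlgHom F (HRel q) (FreeAlgebra.ι F g)

/-- The coproduct on the free algebra (composed with the projection to H' ⊗ H'),
defined on generators by Δ(e) = e⊗k + k⁻¹⊗e, Δ(f) = f⊗k + k⁻¹⊗f,
Δ(k^±1) = k^±1 ⊗ k^±1, extended as an algebra morphism. -/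
def Hcomul {F : Type} [Field F] (q : F) : FreeAlgebra F HGen →ₐ[F] (Hq q ⊗[F] Hq q) :=
  FreeAlgebra.lift F fun g =>
    match g with
    | e => HMk q e ⊗ₜ HMk q k + HMk q kinv ⊗ₜ HMk q e
    | f => HMk q f ⊗ₜ HMk q k + HMk q kinv ⊗ₜ HMk q f
    | k => HMk q k ⊗ₜ HMk q k
    | kinv => HMk q kinv ⊗ₜ HMk q kinv

section Aux

variable {F : Type} [Field F] (q : F)

lemma hKK : HMk q k * HMk q kinv = 1 := by
  have h := RingQuot.mkAlgHom_rel F (HRel.kk (q := q))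
  simp only [map_mul, map_one] at h
  exact h

lemma hKiK : HMk q kinv * HMk q k = 1 := by
  have h := RingQuot.mkAlgHom_rel F (HRel.kk' (q := q))
  simp only [map_mul, map_one] at h
  exact h

lemma hEK : HMk q e * HMk q k = (-q⁻¹) • (HMk q k * HMk q e) := by
  have h := RingQuot.mkAlgHom_rel F (HRel.ek (q := q))
  simp only [map_mul, map_smul] at h
  exact h

lemma hFK : HMk q f * HMk q k = (-q) • (HMk q k * HMk q f) := by
  have h := RingQuot.mkAlgHom_rel F (HRel.fk (q := q))
  simp only [map_mul, map_smul] at h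
  exact h

lemma hEF' : HMk q e * HMk q f
    = HMk q f * HMk q e + (q - q⁻¹) • (HMk q k * HMk q k - HMk q kinv * HMk q kinv) := by
  have h := RingQuot.mkAlgHom_rel F (HRel.ef (q := q))
  simp only [map_mul, map_smul, map_sub, map_pow] at h
  rw [sub_eq_iff_eq_add] at h
  simp only [HMk]
  rw [h, sq, sq]; abel

lemma hEKi (hq0 : q ≠ 0) :
    HMk q e * HMk q kinv = (-q) • (HMk q kinv * HMk q e) := by
  have h1 : HMk q kinv * HMk q e = (-q⁻¹) • (HMk q e * HMk q kinv) := by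
    calc HMk q kinv * HMk q e
        = HMk q kinv * ((HMk q e * HMk q k) * HMk q kinv) := by
          rw [mul_assoc, hKK, mul_one]
      _ = HMk q kinv * (((-q⁻¹) • (HMk q k * HMk q e)) * HMk q kinv) := by rw [hEK]
      _ = (-q⁻¹) • ((HMk q kinv * HMk q k) * (HMk q e * HMk q kinv)) := by
          simp only [smul_mul_assoc, mul_smul_comm, mul_assoc]
      _ = (-q⁻¹) • (HMk q e * HMk q kinv) := by rw [hKiK, one_mul]
  rw [h1, smul_smul, neg_mul_neg, mul_inv_cancel₀ hq0, one_smul]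

lemma hFKi (hq0 : q ≠ 0) :
    HMk q f * HMk q kinv = (-q⁻¹) • (HMk q kinv * HMk q f) := by
  have h1 : HMk q kinv * HMk q f = (-q) • (HMk q f * HMk q kinv) := by
    calc HMk q kinv * HMk q f
        = HMk q kinv * ((HMk q f * HMk q k) * HMk q kinv) := by
          rw [mul_assoc, hKK, mul_one]
      _ = HMk q kinv * (((-q) • (HMk q k * HMk q f)) * HMk q kinv) := by rw [hFK]
      _ = (-q) • ((HMk q kinv * HMk q k) * (HMk q f * HMk q kinv)) := by
          simp only [smul_mul_assoc, mul_smul_comm, mul_assoc]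
      _ = (-q) • (HMk q f * HMk q kinv) := by rw [hKiK, one_mul]
  rw [h1, smul_smul, neg_mul_neg, inv_mul_cancel₀ hq0, one_smul]

end Aux

/-- The coproduct descends to the quotient H': it maps each defining relation of H'
into the corresponding ideal, i.e. it identifies the two sides of each relation after
projecting to H' ⊗ H'. -/
theorem stmt13 {F : Type} [Field F] (q : F) (hq0 : q ≠ 0) (hq1 : q ≠ 1) (hqm1 : q ≠ -1) :
    ∀ a b : FreeAlgebra F HGen, HRel q a b → Hcomul q a = Hcomul q b := by
  intro a b h
  cases h with
  | kk =>
      simp only [Hcomul, map_mul, map_one, FreeAlgebra.lift_ι_apply,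
        Algebra.TensorProduct.tmul_mul_tmul, hKK, Algebra.TensorProduct.one_def]
  | kk' =>
      simp only [Hcomul, map_mul, map_one, FreeAlgebra.lift_ι_apply,
        Algebra.TensorProduct.tmul_mul_tmul, hKiK, Algebra.TensorProduct.one_def]
  | ek =>
      simp only [Hcomul, map_mul, map_smul, FreeAlgebra.lift_ι_apply]
      simp only [add_mul, mul_add, Algebra.TensorProduct.tmul_mul_tmul,
        hEK, hKK, hKiK, TensorProduct.smul_tmul', TensorProduct.tmul_smul, smul_add]
      try module
  | fk =>
      simp only [Hcomul, map_mul, map_smul, FreeAlgebra.lift_ι_apply]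
      simp only [add_mul, mul_add, Algebra.TensorProduct.tmul_mul_tmul,
        hFK, hKK, hKiK, TensorProduct.smul_tmul', TensorProduct.tmul_smul, smul_add]
      try module
  | ef =>
      simp only [Hcomul, map_mul, map_smul, map_sub, map_pow, FreeAlgebra.lift_ι_apply]
      simp only [add_mul, mul_add, sub_mul, mul_sub, sq,
        Algebra.TensorProduct.tmul_mul_tmul,
        hEF' q, hEK, hFK, hEKi q hq0, hFKi q hq0, hKK, hKiK,
        TensorProduct.smul_tmul', TensorProduct.tmul_smul,
        TensorProduct.sub_tmul, TensorProduct.tmul_sub, TensorProduct.add_tmul,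
        TensorProduct.tmul_add, smul_add, smul_sub]
      try module
      abel

end
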